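/- Let H ∈ ℂ^{m×n}, γ ≥ (1/2)λ_max(HᴴH)², and G(S₀) = Hᴴ(I + H S₀ Hᴴ)⁻¹H. Then for all Hermitian PSD n×n matrices S and S₀: log det(I + H S Hᴴ) ≥ log det(I + H S₀ Hᴴ) + Re Tr(G(S₀)(S − S₀)) − γ Tr((S − S₀)ᴴ(S − S₀)). That is, the quadratic function on the right is a global minorant of log det(I + H S Hᴴ) that is tight at S₀. -/

import Mathlib

open Matrix ComplexOrder

section Aux

open Polynomial

variable {k : Type*} [Fintype k] [DecidableEq k]

open scoped MatrixOrder in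
private noncomputable def Matrix.PosSemidef.sqrt {X : Matrix k k ℂ} (_hX : X.PosSemidef) :
    Matrix k k ℂ := CFC.sqrt X

open scoped MatrixOrder in
private lemma Matrix.PosSemidef.sqrt_mul_self {X : Matrix k k ℂ} (hX : X.PosSemidef) :
    hX.sqrt * hX.sqrt = X := CFC.sqrt_mul_sqrt_self X hX.nonneg

open scoped MatrixOrder in
private lemma Matrix.PosSemidef.posSemidef_sqrt {X : Matrix k k ℂ} (hX : X.PosSemidef) :
    hX.sqrt.PosSemidef := (CFC.sqrt_nonneg X).posSemidef

private lemma aux_trace_nonneg {X : Matrix k k ℂ} (hX : X.PosSemidef) : 0 ≤ X.trace := by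
  unfold Matrix.trace
  refine Finset.sum_nonneg fun i _ => ?_
  have := hX.dotProduct_mulVec_nonneg (Pi.single i 1)
  simpa [Matrix.mulVec_single, dotProduct, Pi.single_apply, Finset.sum_ite_eq'] using this

private lemma aux_trace_mul_nonneg {X Y : Matrix k k ℂ} (hX : X.PosSemidef) (hY : Y.PosSemidef) :
    0 ≤ (X * Y).trace := by
  have h1 : (X * Y).trace = (hX.sqrt * Y * hX.sqrt).trace := by
    conv_lhs => rw [← hX.sqrt_mul_self]
    rw [Matrix.mul_assoc, Matrix.trace_mul_comm, Matrix.mul_assoc]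
  rw [h1]
  have : (hX.sqrt * Y * hX.sqrt).PosSemidef := by
    have := hY.conjTranspose_mul_mul_same hX.sqrt
    rwa [hX.posSemidef_sqrt.isHermitian.eq] at this
  exact aux_trace_nonneg this

private lemma aux_core {P Q M : Matrix k k ℂ} (hP1 : (1 - P).PosSemidef) (hQ : Q.PosSemidef)
    (hQ1 : (1 - Q).PosSemidef) (hM : M.IsHermitian) :
    ((P * M * Q * M).trace).re ≤ ((M * M).trace).re := by
  have h1 : 0 ≤ ((1 - P) * (M * Q * M)).trace := by
    refine aux_trace_mul_nonneg hP1 ?_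
    have := hQ.conjTranspose_mul_mul_same M
    rwa [hM.eq] at this
  have h2 : 0 ≤ (M * M * (1 - Q)).trace := by
    refine aux_trace_mul_nonneg ?_ hQ1
    have := Matrix.posSemidef_conjTranspose_mul_self M
    rwa [hM.eq] at this
  have e1 : ((1 - P) * (M * Q * M)).trace = (M * Q * M).trace - (P * M * Q * M).trace := by
    rw [Matrix.sub_mul, Matrix.one_mul, Matrix.trace_sub, ← Matrix.mul_assoc, ← Matrix.mul_assoc]
  have e2 : (M * M * (1 - Q)).trace = (M * M).trace - (M * Q * M).trace := by
    rw [Matrix.mul_sub, Matrix.mul_one, Matrix.trace_sub]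
    congr 1
    rw [Matrix.trace_mul_comm, Matrix.trace_mul_cycle]
    exact Matrix.trace_mul_comm _ _
  have r1 : 0 ≤ ((1 - P) * (M * Q * M)).trace.re := (Complex.le_def.mp h1).1
  have r2 : 0 ≤ (M * M * (1 - Q)).trace.re := (Complex.le_def.mp h2).1
  rw [e1] at r1; rw [e2] at r2
  simp only [Complex.sub_re] at r1 r2
  linarith

private lemma aux_smul_psd {c : ℝ} (hc : 0 ≤ c) {X : Matrix k k ℂ} (hX : X.PosSemidef) :
    ((c : ℂ) • X).PosSemidef := by
  constructor
  · show ((c:ℂ) • X)ᴴ = _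
    rw [Matrix.conjTranspose_smul, hX.1.eq, RCLike.star_def, Complex.conj_ofReal]
  · intro x
    exact (hX.smul (Complex.zero_le_real.mpr hc)).2 x

private lemma aux_smul_one_sub_psd {K : Matrix k k ℂ} (hK : K.IsHermitian) {c : ℝ}
    (hbd : ∀ i, hK.eigenvalues i ≤ c) : ((c : ℂ) • 1 - K).PosSemidef := by
  set U : Matrix k k ℂ := (hK.eigenvectorUnitary : Matrix k k ℂ) with hU
  have hUU : U * star U = 1 := (Matrix.mem_unitaryGroup_iff).mp hK.eigenvectorUnitary.2
  have h1 : (c : ℂ) • (1 : Matrix k k ℂ) = U * ((c : ℂ) • 1) * star U := by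
    rw [Matrix.mul_smul, Matrix.smul_mul, Matrix.mul_one, hUU]
  have h2 : (c : ℂ) • (1 : Matrix k k ℂ) - K =
      U * ((c : ℂ) • 1 - diagonal (RCLike.ofReal ∘ hK.eigenvalues)) * star U := by
    conv_lhs => rw [h1, hK.spectral_theorem, Unitary.conjStarAlgAut_apply]
    rw [Matrix.mul_sub, Matrix.sub_mul]
  rw [h2]
  have h3 : ((c : ℂ) • (1 : Matrix k k ℂ)
      - diagonal (RCLike.ofReal ∘ hK.eigenvalues)).PosSemidef := by
    rw [Matrix.smul_one_eq_diagonal, Matrix.diagonal_sub]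
    refine Matrix.PosSemidef.diagonal fun i => ?_
    rw [Function.comp_apply]
    show (0:ℂ) ≤ ((c : ℂ) - ((hK.eigenvalues i : ℝ) : ℂ))
    rw [← Complex.ofReal_sub, Complex.zero_le_real]
    exact sub_nonneg.mpr (hbd i)
  have := h3.mul_mul_conjTranspose_same U
  rwa [← Matrix.star_eq_conjTranspose] at this

private lemma aux_one_sub_inv_psd {W : Matrix k k ℂ} (hW : W.PosSemidef) :
    (1 - (1 + W)⁻¹).PosSemidef := by
  have hPD : (1 + W).PosDef := Matrix.PosDef.add_posSemidef Matrix.PosDef.one hW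
  have hdet : IsUnit (1 + W).det := (Matrix.isUnit_iff_isUnit_det _).mp hPD.isUnit
  have hid : 1 - (1 + W)⁻¹ = (1 + W)⁻¹ * (W + W * W) * (1 + W)⁻¹ := by
    have e1 : (1 + W)⁻¹ * (W + W * W) * (1 + W)⁻¹
        = (1 + W)⁻¹ * (W * ((1 + W) * (1 + W)⁻¹)) := by
      noncomm_ring
    rw [e1, Matrix.mul_nonsing_inv _ hdet, Matrix.mul_one]
    have e2 : (1:Matrix k k ℂ) - (1 + W)⁻¹ = (1 + W)⁻¹ * ((1 + W) - 1) := by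
      rw [Matrix.mul_sub, Matrix.mul_one, Matrix.nonsing_inv_mul _ hdet]
    rw [e2, add_sub_cancel_left]
  rw [hid]
  have hWW : (W + W * W).PosSemidef := by
    refine hW.add ?_
    have := Matrix.posSemidef_conjTranspose_mul_self W
    rwa [hW.isHermitian.eq] at this
  have hinvH : ((1 + W)⁻¹).IsHermitian := hPD.isHermitian.inv
  have := hWW.conjTranspose_mul_mul_same (1 + W)⁻¹
  rwa [hinvH.eq] at this

private lemma aux_stepK {X K : Matrix k k ℂ} (hX : X.PosSemidef) {c : ℝ}
    (hKle : ((c : ℂ) • 1 - K).PosSemidef) :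
    ((X * K).trace).re ≤ c * (X.trace).re := by
  have h0 : 0 ≤ (X * ((c : ℂ) • 1 - K)).trace := aux_trace_mul_nonneg hX hKle
  have e : (X * ((c : ℂ) • 1 - K)).trace = (c : ℂ) * X.trace - (X * K).trace := by
    rw [Matrix.mul_sub, Matrix.trace_sub, Matrix.mul_smul, Matrix.mul_one, Matrix.trace_smul,
      smul_eq_mul]
  rw [e] at h0
  have := (Complex.le_def.mp h0).1
  rw [Complex.sub_re, Complex.re_ofReal_mul, Complex.zero_re] at this
  linarith

private lemma aux_hasDerivAt (A M : Matrix k k ℂ) (t₀ : ℝ) (hPD : (A + (t₀:ℂ) • M).PosDef) :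
    HasDerivAt (fun t : ℝ => Real.log ((A + (t:ℂ) • M).det.re))
      ((((A + (t₀:ℂ) • M)⁻¹ * M).trace).re) t₀ := by
  set A₀ : Matrix k k ℂ := A + (t₀:ℂ) • M with hA₀
  have hdet : IsUnit A₀.det := (Matrix.isUnit_iff_isUnit_det _).mp hPD.isUnit
  have hpos : (0:ℂ) < A₀.det := hPD.det_pos
  have hr₀ : 0 < A₀.det.re := by simpa using (Complex.lt_def.mp hpos).1
  have him : A₀.det.im = 0 := by simpa using (Complex.lt_def.mp hpos).2.symm
  have hAofReal : ((A₀.det.re : ℝ) : ℂ) = A₀.det := by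
    apply Complex.ext <;> simp [him]
  set N : Matrix k k ℂ := A₀⁻¹ * M with hN
  set e : Polynomial ℂ := (1 + (Polynomial.X : Polynomial ℂ) • N.map ⇑Polynomial.C).det.divX.divX
    with he
  have hA0N : A₀ * N = M := by
    rw [hN, ← Matrix.mul_assoc, Matrix.mul_nonsing_inv _ hdet, Matrix.one_mul]
  have hkey : ∀ t : ℝ, A + (t:ℂ) • M = A₀ * (1 + ((t:ℂ) - (t₀:ℂ)) • N) := by
    intro t
    rw [Matrix.mul_add, Matrix.mul_one, Matrix.mul_smul, hA0N, sub_smul, hA₀]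
    abel
  have hfun : ∀ t : ℝ, (A + (t:ℂ) • M).det.re =
      (A₀.det * (1 + N.trace * ((t - t₀ : ℝ) : ℂ) +
        e.eval ((t - t₀ : ℝ) : ℂ) * ((t - t₀ : ℝ) : ℂ)^2)).re := by
    intro t
    rw [hkey t, Matrix.det_mul]
    congr 2
    rw [show ((t:ℂ) - (t₀:ℂ)) = ((t - t₀ : ℝ) : ℂ) by push_cast; ring]
    exact Matrix.det_one_add_smul _ N
  have hpoly : HasDerivAt (fun z : ℂ => 1 + N.trace * z + (e.eval z) * z^2) N.trace 0 := by
    have h1 : HasDerivAt (fun z : ℂ => 1 + N.trace * z) (N.trace * 1) 0 :=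
      ((hasDerivAt_id (0:ℂ)).const_mul N.trace).const_add 1
    have h2 : HasDerivAt (fun z : ℂ => (e.eval z) * z^2)
        ((e.derivative.eval 0) * (0:ℂ)^2 + e.eval 0 * ((2:ℕ) * (0:ℂ)^(2-1))) 0 :=
      (e.hasDerivAt 0).mul (hasDerivAt_pow 2 0)
    have := h1.add h2
    refine this.congr_deriv ?_
    simp
  have hreal : HasDerivAt (fun s : ℝ => 1 + N.trace * (s:ℂ) + (e.eval (s:ℂ)) * (s:ℂ)^2)
      N.trace 0 := by
    have h0 : HasDerivAt (fun z : ℂ => 1 + N.trace * z + (e.eval z) * z^2) N.trace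
        (((0:ℝ):ℂ)) := by simpa using hpoly
    exact h0.comp_ofReal
  have hin : HasDerivAt (fun t : ℝ => t - t₀) 1 t₀ := (hasDerivAt_id t₀).sub_const t₀
  have hshift : HasDerivAt
      (fun t : ℝ => 1 + N.trace * ((t - t₀ : ℝ) : ℂ) +
        (e.eval ((t - t₀ : ℝ) : ℂ)) * ((t - t₀ : ℝ) : ℂ)^2) N.trace t₀ := by
    have h0 : HasDerivAt (fun s : ℝ => 1 + N.trace * (s:ℂ) + (e.eval (s:ℂ)) * (s:ℂ)^2)
        N.trace (t₀ - t₀) := by simpa using hreal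
    have h := HasDerivAt.scomp (h := fun t : ℝ => t - t₀) t₀ h0 hin
    rw [one_smul] at h
    exact h
  have hmul := hshift.const_mul A₀.det
  have hre := Complex.reCLM.hasFDerivAt.comp_hasDerivAt t₀ hmul
  simp only [Function.comp_def, Complex.reCLM_apply] at hre
  have hre2 : HasDerivAt (fun t : ℝ => (A + (t:ℂ) • M).det.re) ((A₀.det * N.trace).re) t₀ := by
    refine hre.congr_of_eventuallyEq ?_
    filter_upwards with t
    exact hfun t
  have hlog := (Real.hasDerivAt_log hr₀.ne').comp t₀ hre2
  have hval : A₀.det.re⁻¹ * (A₀.det * N.trace).re = N.trace.re := by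
    obtain ⟨r, hr⟩ : ∃ r : ℝ, (r:ℂ) = A₀.det := ⟨_, hAofReal⟩
    have hrpos : 0 < r := by rw [← hr] at hr₀; simpa using hr₀
    rw [← hr, Complex.re_ofReal_mul]
    simp only [Complex.ofReal_re]
    rw [inv_mul_cancel_left₀ hrpos.ne']
  have h2 : HasDerivAt (fun t : ℝ => Real.log ((A + (t:ℂ) • M).det.re)) (N.trace.re) t₀ := by
    have := hlog
    simp only [Function.comp_def] at this
    exact this.congr_deriv hval
  exact h2

end Aux

/-- Quadratic global minorant (Proposition 1): for `γ ≥ (1/2) λ_max(HᴴH)²` and Hermitian PSD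
`S, S₀`, `log det(I + H S Hᴴ) ≥ log det(I + H S₀ Hᴴ) + Re Tr(G(S₀)(S − S₀))
− γ Tr((S − S₀)ᴴ(S − S₀))` where `G(S₀) = Hᴴ(I + H S₀ Hᴴ)⁻¹H`. -/
theorem quadratic_surrogate_minorant
    {m n : ℕ} (H : Matrix (Fin m) (Fin n) ℂ) (γ : ℝ)
    (hγ : (1 / 2) * (⨆ j, (isHermitian_mul_conjTranspose_self Hᴴ).eigenvalues j) ^ 2 ≤ γ)
    (S S₀ : Matrix (Fin n) (Fin n) ℂ) (hS : S.PosSemidef) (hS₀ : S₀.PosSemidef) :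
    Real.log ((1 + H * S₀ * Hᴴ).det.re) +
        (Matrix.trace ((Hᴴ * (1 + H * S₀ * Hᴴ)⁻¹ * H) * (S - S₀))).re -
        γ * (Matrix.trace ((S - S₀)ᴴ * (S - S₀))).re ≤
      Real.log ((1 + H * S * Hᴴ).det.re) := by
  classical
  set Δ : Matrix (Fin n) (Fin n) ℂ := S - S₀ with hΔdef
  have hΔ : Δ.IsHermitian := hS.1.sub hS₀.1
  set A : Matrix (Fin m) (Fin m) ℂ := 1 + H * S₀ * Hᴴ with hAdef
  set B : Matrix (Fin m) (Fin m) ℂ := 1 + H * S * Hᴴ with hBdef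
  set M : Matrix (Fin m) (Fin m) ℂ := H * Δ * Hᴴ with hMdef
  have hM : M.IsHermitian := by
    show Mᴴ = M
    rw [hMdef]
    simp [Matrix.conjTranspose_mul, Matrix.mul_assoc, hΔ.eq]
  -- the eigenvalue bound
  set K : Matrix (Fin n) (Fin n) ℂ := Hᴴ * Hᴴᴴ with hKdef
  have hK : K.IsHermitian := isHermitian_mul_conjTranspose_self Hᴴ
  have hKH : K = Hᴴ * H := by rw [hKdef, conjTranspose_conjTranspose]
  have hKpsd : K.PosSemidef := posSemidef_self_mul_conjTranspose Hᴴ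
  set c : ℝ := ⨆ j, (isHermitian_mul_conjTranspose_self Hᴴ).eigenvalues j with hcdef
  have hble : ∀ i, hK.eigenvalues i ≤ c :=
    fun i => le_ciSup (Set.Finite.bddAbove (Set.finite_range _)) i
  have hc0 : 0 ≤ c := Real.iSup_nonneg fun i => hKpsd.eigenvalues_nonneg i
  have hKle : ((c:ℂ) • 1 - K).PosSemidef := aux_smul_one_sub_psd hK hble
  set D : ℝ := ((Δᴴ * Δ).trace).re with hDdef
  have hD0 : 0 ≤ D :=
    (Complex.le_def.mp (aux_trace_nonneg (Matrix.posSemidef_conjTranspose_mul_self Δ))).1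
  -- bound Re tr (M*M) ≤ c^2 * D
  have hMM : ((M * M).trace).re ≤ c^2 * D := by
    have hX : (Δᴴ * K * Δ).PosSemidef := hKpsd.conjTranspose_mul_mul_same Δ
    have step1 : ((Δᴴ * K * Δ * K).trace).re ≤ c * ((Δᴴ * K * Δ).trace).re := aux_stepK hX hKle
    have e1 : (Δᴴ * K * Δ).trace = ((Δ * Δᴴ) * K).trace := by
      rw [Matrix.trace_mul_cycle]
    have step2 : (((Δ * Δᴴ) * K).trace).re ≤ c * D := by
      have := aux_stepK (Matrix.posSemidef_self_mul_conjTranspose Δ) hKle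
      rwa [Matrix.trace_mul_comm Δ Δᴴ] at this
    have e0 : (M * M).trace = (Δᴴ * K * Δ * K).trace := by
      rw [hΔ.eq, hKH, hMdef]
      simp only [Matrix.mul_assoc]
      rw [Matrix.trace_mul_comm]
      simp only [Matrix.mul_assoc]
    rw [e0]
    calc ((Δᴴ * K * Δ * K).trace).re ≤ c * ((Δᴴ * K * Δ).trace).re := step1
      _ = c * (((Δ * Δᴴ) * K).trace).re := by rw [e1]
      _ ≤ c * (c * D) := by
          refine mul_le_mul_of_nonneg_left step2 hc0
      _ = c^2 * D := by ring
  -- positive definiteness along the segment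
  have hseg : ∀ t : ℝ, t ∈ Set.Icc (0:ℝ) 1 →
      A + (t:ℂ) • M = 1 + H * (S₀ + (t:ℂ) • Δ) * Hᴴ := by
    intro t _
    rw [hAdef, hMdef, Matrix.mul_add, Matrix.mul_smul, Matrix.add_mul, Matrix.smul_mul]
    rw [add_assoc]
  have hStPsd : ∀ t : ℝ, t ∈ Set.Icc (0:ℝ) 1 → (S₀ + (t:ℂ) • Δ).PosSemidef := by
    intro t ht
    have hident : S₀ + (t:ℂ) • Δ = ((1 - t : ℝ) : ℂ) • S₀ + ((t : ℝ) : ℂ) • S := by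
      rw [hΔdef]
      push_cast
      module
    rw [hident]
    exact (aux_smul_psd (by linarith [ht.2]) hS₀).add (aux_smul_psd ht.1 hS)
  have hAt : ∀ t : ℝ, t ∈ Set.Icc (0:ℝ) 1 → (A + (t:ℂ) • M).PosDef := by
    intro t ht
    rw [hseg t ht]
    exact Matrix.PosDef.add_posSemidef Matrix.PosDef.one
      ((hStPsd t ht).mul_mul_conjTranspose_same H)
  have h1At : ∀ t : ℝ, t ∈ Set.Icc (0:ℝ) 1 → (1 - (A + (t:ℂ) • M)⁻¹).PosSemidef := by
    intro t ht
    rw [hseg t ht]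
    exact aux_one_sub_inv_psd ((hStPsd t ht).mul_mul_conjTranspose_same H)
  have hA0 : A + ((0:ℝ):ℂ) • M = A := by simp
  have hAPD : A.PosDef := by
    have := hAt 0 (by norm_num)
    rwa [hA0] at this
  have hA1 : A + ((1:ℝ):ℂ) • M = B := by
    rw [hAdef, hBdef, hMdef, hΔdef]
    rw [Matrix.mul_sub, Matrix.sub_mul]
    push_cast
    rw [one_smul]
    abel
  have hdetA : IsUnit A.det := (Matrix.isUnit_iff_isUnit_det _).mp hAPD.isUnit
  -- gradient bound
  set T₀ : ℝ := ((A⁻¹ * M).trace).re with hT₀def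
  have hgrad : ∀ t : ℝ, t ∈ Set.Icc (0:ℝ) 1 →
      T₀ - (((A + (t:ℂ) • M)⁻¹ * M).trace).re ≤ t * (c^2 * D) := by
    intro t ht
    set At : Matrix (Fin m) (Fin m) ℂ := A + (t:ℂ) • M with hAtdef
    have hAtPD : At.PosDef := hAt t ht
    have hdetAt : IsUnit At.det := (Matrix.isUnit_iff_isUnit_det _).mp hAtPD.isUnit
    have hIdent : A⁻¹ - At⁻¹ = (t:ℂ) • (A⁻¹ * M * At⁻¹) := by
      calc A⁻¹ - At⁻¹ = A⁻¹ * (At * At⁻¹) - (A⁻¹ * A) * At⁻¹ := by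
            rw [Matrix.mul_nonsing_inv _ hdetAt, Matrix.nonsing_inv_mul _ hdetA,
              Matrix.mul_one, Matrix.one_mul]
        _ = A⁻¹ * (At - A) * At⁻¹ := by noncomm_ring
        _ = (t:ℂ) • (A⁻¹ * M * At⁻¹) := by
            rw [hAtdef, add_sub_cancel_left, Matrix.mul_smul, Matrix.smul_mul]
    have htr : T₀ - ((At⁻¹ * M).trace).re = t * ((A⁻¹ * M * At⁻¹ * M).trace).re := by
      have : ((A⁻¹ - At⁻¹) * M).trace = (t:ℂ) • ((A⁻¹ * M * At⁻¹ * M).trace) := by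
        rw [hIdent, Matrix.smul_mul, Matrix.trace_smul]
      have hre := congrArg Complex.re this
      rw [Matrix.sub_mul, Matrix.trace_sub, Complex.sub_re] at hre
      rw [smul_eq_mul, Complex.re_ofReal_mul] at hre
      rw [hT₀def]
      linarith [hre]
    rw [htr]
    have hcore : ((A⁻¹ * M * At⁻¹ * M).trace).re ≤ ((M * M).trace).re := by
      refine aux_core ?_ hAtPD.inv.posSemidef ?_ hM
      · have := h1At 0 (by norm_num)
        rwa [hA0] at this
      · exact h1At t ht
    have := hcore.trans hMM
    exact mul_le_mul_of_nonneg_left this ht.1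
  -- the auxiliary function F
  set g : ℝ → ℝ := fun t => Real.log ((A + (t:ℂ) • M).det.re) with hgdef
  set F : ℝ → ℝ := fun t => g t - T₀ * t + (γ * D) * t^2 with hFdef
  have hFderiv : ∀ t : ℝ, t ∈ Set.Icc (0:ℝ) 1 →
      HasDerivAt F ((((A + (t:ℂ) • M)⁻¹ * M).trace).re - T₀ + (γ * D) * (2 * t)) t := by
    intro t ht
    have h1 := aux_hasDerivAt A M t (hAt t ht)
    have h2 : HasDerivAt (fun s : ℝ => T₀ * s) (T₀ * 1) t := (hasDerivAt_id t).const_mul T₀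
    have h3 : HasDerivAt (fun s : ℝ => (γ * D) * s^2) ((γ * D) * ((2:ℕ) * t^(2-1))) t :=
      (hasDerivAt_pow 2 t).const_mul (γ * D)
    have := (h1.sub h2).add h3
    refine this.congr_deriv ?_
    push_cast
    ring
  have hmono : MonotoneOn F (Set.Icc (0:ℝ) 1) := by
    refine monotoneOn_of_hasDerivWithinAt_nonneg (convex_Icc 0 1) ?_
      (f' := fun t => (((A + (t:ℂ) • M)⁻¹ * M).trace).re - T₀ + (γ * D) * (2 * t)) ?_ ?_
    · intro t ht
      exact (hFderiv t ht).continuousAt.continuousWithinAt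
    · intro t ht
      rw [interior_Icc] at ht
      exact ((hFderiv t ⟨ht.1.le, ht.2.le⟩).hasDerivWithinAt)
    · intro t ht
      rw [interior_Icc] at ht
      have hb := hgrad t ⟨ht.1.le, ht.2.le⟩
      have hcc : c^2 * D ≤ 2 * γ * D := by
        refine mul_le_mul_of_nonneg_right ?_ hD0
        linarith [hγ]
      have ht0 : (0:ℝ) ≤ t := ht.1.le
      nlinarith [hb, hcc, mul_le_mul_of_nonneg_left hcc ht0]
  have hF01 : F 0 ≤ F 1 := hmono (by norm_num) (by norm_num) zero_le_one
  have hF0 : F 0 = Real.log (A.det.re) := by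
    rw [hFdef]
    simp only [hgdef]
    rw [show ((0:ℝ):ℂ) = (0:ℂ) by norm_num]
    simp
  have hF1 : F 1 = Real.log (B.det.re) - T₀ + γ * D := by
    rw [hFdef]
    simp only [hgdef]
    rw [hA1]
    ring
  -- identify the trace terms
  have hTeq : (Matrix.trace ((Hᴴ * A⁻¹ * H) * Δ)).re = T₀ := by
    rw [hT₀def, hMdef]
    congr 1
    simp only [Matrix.mul_assoc]
    rw [Matrix.trace_mul_comm]
    simp only [Matrix.mul_assoc]
  rw [hTeq]
  have : Real.log (A.det.re) ≤ Real.log (B.det.re) - T₀ + γ * D := by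
    rw [← hF0, ← hF1]; exact hF01
  linarith [this]
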